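/- Let A be the nilpotent Matsuo algebra (characteristic 2) of a Fischer space of symplectic type. Then for every line ℓ, the operator ad_{s_ℓ} of left multiplication by the line nilpotent s_ℓ is idempotent: s_ℓ·(s_ℓ·a) = s_ℓ·a for all a ∈ A. -/

import Mathlib

/-- A partial triple system, given by a collinearity relation `col` and a map `third`
sending two distinct collinear points to the third point on their line. -/
structure IsPTS {P : Type*} (col : P → P → Prop) (third : P → P → P) : Prop where
  symm : ∀ x y, col x y → col y x
  irrefl : ∀ x, ¬ col x x
  third_symm : ∀ x y, col x y → third x y = third y x
  col_third : ∀ x y, col x y → col x (third x y)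
  third_ne_left : ∀ x y, col x y → third x y ≠ x
  third_ne_right : ∀ x y, col x y → third x y ≠ y
  third_third : ∀ x y, col x y → third x (third x y) = y
  unique_line : ∀ x y u v, col x y → col u v →
    x ∈ ({u, v, third u v} : Set P) → y ∈ ({u, v, third u v} : Set P) →
    ({x, y, third x y} : Set P) = {u, v, third u v}

/-- A subspace of a partial triple system: a set of points closed under taking
the third point of a line through two of its points. -/
def IsSubspace {P : Type*} (col : P → P → Prop) (third : P → P → P) (S : Set P) : Prop :=
  ∀ x ∈ S, ∀ y ∈ S, col x y → third x y ∈ S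

/-- The subspace generated by a set of points. -/
def fclosure {P : Type*} (col : P → P → Prop) (third : P → P → P) (T : Set P) : Set P :=
  ⋂₀ {S | T ⊆ S ∧ IsSubspace col third S}

/-- The line through two distinct collinear points, as a set. -/
def lineSet {P : Type*} (third : P → P → P) (x y : P) : Set P := {x, y, third x y}

/-- The six points of the complete quadrilateral (dual affine plane of order 2). -/
inductive CQPt | A | B | C | X | Y | Z
deriving DecidableEq

/-- The "opposite point" involution of the complete quadrilateral. -/
def CQPt.opp : CQPt → CQPt
  | .A => .X | .X => .A | .B => .Y | .Y => .B | .C => .Z | .Z => .C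

/-- Collinearity in the complete quadrilateral with lines
{A,B,C}, {A,Y,Z}, {B,X,Z}, {C,X,Y}: two points are collinear iff they are
distinct and not opposite. -/
def CQPt.col (p q : CQPt) : Prop := p ≠ q ∧ q ≠ p.opp

/-- The third point on the line through two distinct collinear points of the
complete quadrilateral. -/
def CQPt.third : CQPt → CQPt → CQPt
  | .A, .B => .C | .B, .A => .C | .A, .C => .B | .C, .A => .B | .B, .C => .A | .C, .B => .A
  | .A, .Y => .Z | .Y, .A => .Z | .A, .Z => .Y | .Z, .A => .Y | .Y, .Z => .A | .Z, .Y => .A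
  | .B, .X => .Z | .X, .B => .Z | .B, .Z => .X | .Z, .B => .X | .X, .Z => .B | .Z, .X => .B
  | .C, .X => .Y | .X, .C => .Y | .C, .Y => .X | .Y, .C => .X | .X, .Y => .C | .Y, .X => .C
  | p, _ => p

/-- A set of points is a complete quadrilateral if it is the isomorphic image of
the standard one (preserving collinearity and the `third` operation). -/
def IsCQSet {P : Type*} (col : P → P → Prop) (third : P → P → P) (S : Set P) : Prop :=
  ∃ f : CQPt → P, Function.Injective f ∧ Set.range f = S ∧
    (∀ u v, col (f u) (f v) ↔ CQPt.col u v) ∧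
    (∀ u v, CQPt.col u v → f (CQPt.third u v) = third (f u) (f v))

/-- A set of points is an affine plane of order 3 if it is the isomorphic image of
`AG(2,3)` (any two distinct points collinear, third point `-(u+v)`). -/
def IsAPSet {P : Type*} (col : P → P → Prop) (third : P → P → P) (S : Set P) : Prop :=
  ∃ f : ZMod 3 × ZMod 3 → P, Function.Injective f ∧ Set.range f = S ∧
    (∀ u v, col (f u) (f v) ↔ u ≠ v) ∧
    (∀ u v, u ≠ v → f (-(u + v)) = third (f u) (f v))

/-- A Fischer space: a partial triple system in which the subspace generated by two
distinct intersecting lines is a complete quadrilateral or an affine plane of order 3. -/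
structure IsFischer {P : Type*} (col : P → P → Prop) (third : P → P → P)
    extends IsPTS col third : Prop where
  dichotomy : ∀ x y u v, col x y → col u v →
    lineSet third x y ≠ lineSet third u v →
    (lineSet third x y ∩ lineSet third u v).Nonempty →
    IsCQSet col third (fclosure col third (lineSet third x y ∪ lineSet third u v)) ∨
    IsAPSet col third (fclosure col third (lineSet third x y ∪ lineSet third u v))

/-- A Fischer space of symplectic type: the subspace generated by two distinct
intersecting lines is always a complete quadrilateral. -/
structure IsSymplectic {P : Type*} (col : P → P → Prop) (third : P → P → P)
    extends IsPTS col third : Prop where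
  cq : ∀ x y u v, col x y → col u v →
    lineSet third x y ≠ lineSet third u v →
    (lineSet third x y ∩ lineSet third u v).Nonempty →
    IsCQSet col third (fclosure col third (lineSet third x y ∪ lineSet third u v))

/-- `A` is the nilpotent Matsuo algebra (char 2) of the geometry `(col, third)`,
with `e` the natural basis indexed by the points. -/
structure IsNilMatsuo (R : Type*) {A P : Type*} [CommRing R] [NonUnitalNonAssocCommRing A]
    [Module R A] (col : P → P → Prop) (third : P → P → P) (e : P → A) : Prop where
  char2 : (2 : R) = 0
  mul_same : ∀ p, e p * e p = 0
  mul_of_not_col : ∀ p q, p ≠ q → ¬ col p q → e p * e q = 0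
  mul_of_col : ∀ p q, p ≠ q → col p q → e p * e q = e p + e q + e (third p q)

instance (p q : CQPt) : Decidable (CQPt.col p q) := by unfold CQPt.col; infer_instance

set_option maxHeartbeats 2000000 in
lemma cq_key {A : Type*} [NonUnitalNonAssocCommRing A]
  (E : CQPt → A)
  (h2 : ∀ a : A, a + a = 0)
  (hsq : ∀ c, E c * E c = 0)
  (hcol : ∀ c d, CQPt.col c d → E c * E d = E c + E d + E (CQPt.third c d))
  (hnot : ∀ c d, c ≠ d → ¬ CQPt.col c d → E c * E d = 0) :
  ∀ u v t, CQPt.col u v →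
    (E u + E v + E (CQPt.third u v)) * ((E u + E v + E (CQPt.third u v)) * E t) =
    (E u + E v + E (CQPt.third u v)) * E t := by
  have hAB := hcol .A .B (by decide)
  have hBA := hcol .B .A (by decide)
  have hAC := hcol .A .C (by decide)
  have hCA := hcol .C .A (by decide)
  have hBC := hcol .B .C (by decide)
  have hCB := hcol .C .B (by decide)
  have hAY := hcol .A .Y (by decide)
  have hYA := hcol .Y .A (by decide)
  have hAZ := hcol .A .Z (by decide)
  have hZA := hcol .Z .A (by decide)
  have hYZ := hcol .Y .Z (by decide)
  have hZY := hcol .Z .Y (by decide)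
  have hBX := hcol .B .X (by decide)
  have hXB := hcol .X .B (by decide)
  have hBZ := hcol .B .Z (by decide)
  have hZB := hcol .Z .B (by decide)
  have hXZ := hcol .X .Z (by decide)
  have hZX := hcol .Z .X (by decide)
  have hCX := hcol .C .X (by decide)
  have hXC := hcol .X .C (by decide)
  have hCY := hcol .C .Y (by decide)
  have hYC := hcol .Y .C (by decide)
  have hXY := hcol .X .Y (by decide)
  have hYX := hcol .Y .X (by decide)
  have hAX := hnot .A .X (by decide) (by decide)
  have hXA := hnot .X .A (by decide) (by decide)
  have hBY := hnot .B .Y (by decide) (by decide)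
  have hYB := hnot .Y .B (by decide) (by decide)
  have hCZ := hnot .C .Z (by decide) (by decide)
  have hZC := hnot .Z .C (by decide) (by decide)
  have z2 : ∀ a : A, (2 : ℤ) • a = 0 := fun a => by rw [two_zsmul]; exact h2 a
  have ze : ∀ (n : ℤ) (a : A), (2 * n) • a = 0 := fun n a => by
    rw [mul_comm, mul_zsmul, z2, smul_zero]
  have z4 : ∀ a : A, (4 : ℤ) • a = 0 := fun a => by
    rw [show (4:ℤ) = 2*2 by norm_num]; exact ze 2 a
  have z6 : ∀ a : A, (6 : ℤ) • a = 0 := fun a => by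
    rw [show (6:ℤ) = 2*3 by norm_num]; exact ze 3 a
  have z8 : ∀ a : A, (8 : ℤ) • a = 0 := fun a => by
    rw [show (8:ℤ) = 2*4 by norm_num]; exact ze 4 a
  have z10 : ∀ a : A, (10 : ℤ) • a = 0 := fun a => by
    rw [show (10:ℤ) = 2*5 by norm_num]; exact ze 5 a
  have z12 : ∀ a : A, (12 : ℤ) • a = 0 := fun a => by
    rw [show (12:ℤ) = 2*6 by norm_num]; exact ze 6 a
  have z3 : ∀ a : A, (3 : ℤ) • a = a := fun a => by
    rw [show (3:ℤ) = 2+1 by norm_num, add_zsmul, z2, one_zsmul, zero_add]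
  have z5 : ∀ a : A, (5 : ℤ) • a = a := fun a => by
    rw [show (5:ℤ) = 4+1 by norm_num, add_zsmul, z4, one_zsmul, zero_add]
  have z7 : ∀ a : A, (7 : ℤ) • a = a := fun a => by
    rw [show (7:ℤ) = 6+1 by norm_num, add_zsmul, z6, one_zsmul, zero_add]
  have z9 : ∀ a : A, (9 : ℤ) • a = a := fun a => by
    rw [show (9:ℤ) = 8+1 by norm_num, add_zsmul, z8, one_zsmul, zero_add]
  have z11 : ∀ a : A, (11 : ℤ) • a = a := fun a => by
    rw [show (11:ℤ) = 10+1 by norm_num, add_zsmul, z10, one_zsmul, zero_add]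
  have thAB : CQPt.third .A .B = .C := rfl
  have thBA : CQPt.third .B .A = .C := rfl
  have thAC : CQPt.third .A .C = .B := rfl
  have thCA : CQPt.third .C .A = .B := rfl
  have thBC : CQPt.third .B .C = .A := rfl
  have thCB : CQPt.third .C .B = .A := rfl
  have thAY : CQPt.third .A .Y = .Z := rfl
  have thYA : CQPt.third .Y .A = .Z := rfl
  have thAZ : CQPt.third .A .Z = .Y := rfl
  have thZA : CQPt.third .Z .A = .Y := rfl
  have thYZ : CQPt.third .Y .Z = .A := rfl
  have thZY : CQPt.third .Z .Y = .A := rfl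
  have thBX : CQPt.third .B .X = .Z := rfl
  have thXB : CQPt.third .X .B = .Z := rfl
  have thBZ : CQPt.third .B .Z = .X := rfl
  have thZB : CQPt.third .Z .B = .X := rfl
  have thXZ : CQPt.third .X .Z = .B := rfl
  have thZX : CQPt.third .Z .X = .B := rfl
  have thCX : CQPt.third .C .X = .Y := rfl
  have thXC : CQPt.third .X .C = .Y := rfl
  have thCY : CQPt.third .C .Y = .X := rfl
  have thYC : CQPt.third .Y .C = .X := rfl
  have thXY : CQPt.third .X .Y = .C := rfl
  have thYX : CQPt.third .Y .X = .C := rfl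
  intro u v t h
  rcases u <;> rcases v <;> rcases t <;>
    first
      | exact absurd h (by decide)
      | (simp only [thAB, thBA, thAC, thCA, thBC, thCB, thAY, thYA, thAZ, thZA, thYZ, thZY, thBX, thXB, thBZ, thZB, thXZ, thZX, thCX, thXC, thCY, thYC, thXY, thYX, mul_add, add_mul, hsq, hAB, hBA, hAC, hCA, hBC, hCB, hAY, hYA,
          hAZ, hZA, hYZ, hZY, hBX, hXB, hBZ, hZB, hXZ, hZX, hCX, hXC, hCY, hYC, hXY, hYX,
          hAX, hXA, hBY, hYB, hCZ, hZC, add_zero, zero_add, mul_zero, zero_mul];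
         abel_nf;
         try simp only [z2, z3, z4, z5, z6, z7, z8, z9, z10, z11, z12, zero_add, add_zero];
         try abel)

/-- In the nilpotent Matsuo algebra (characteristic 2) of a Fischer space of symplectic
type, left multiplication by any line nilpotent `s_ℓ` is an idempotent operator:
`s_ℓ · (s_ℓ · a) = s_ℓ · a` for all `a`. -/
theorem stmt7 {R A P : Type*} [CommRing R] [NonUnitalNonAssocCommRing A]
    [Module R A] [SMulCommClass R A A] [IsScalarTower R A A]
    (col : P → P → Prop) (third : P → P → P)
    (hS : IsSymplectic col third)
    (e : Module.Basis P R A) (hM : IsNilMatsuo R col third ⇑e)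
    (p q : P) (hpq : col p q) :
    ∀ a : A, (e p + e q + e (third p q)) * ((e p + e q + e (third p q)) * a) =
      (e p + e q + e (third p q)) * a := by
  classical
  have hP := hS.toIsPTS
  have h2 : ∀ a : A, a + a = 0 := fun a => by
    have h : (2 : R) • a = 0 := by rw [hM.char2, zero_smul]
    rwa [two_smul] at h
  have z2 : ∀ a : A, (2 : ℤ) • a = 0 := fun a => by rw [two_zsmul]; exact h2 a
  have hnepq : p ≠ q := fun h => hP.irrefl p (h ▸ hpq)
  have hqp : col q p := hP.symm _ _ hpq
  have htqp : third q p = third p q := (hP.third_symm p q hpq).symm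
  have hpr : col p (third p q) := hP.col_third p q hpq
  have hrp : col (third p q) p := hP.symm _ _ hpr
  have hqr : col q (third p q) := by have h := hP.col_third q p hqp; rwa [htqp] at h
  have hrq : col (third p q) q := hP.symm _ _ hqr
  have hrnep : third p q ≠ p := hP.third_ne_left p q hpq
  have hrneq : third p q ≠ q := hP.third_ne_right p q hpq
  have htpr : third p (third p q) = q := hP.third_third p q hpq
  have htrp : third (third p q) p = q := by
    rw [← hP.third_symm p (third p q) hpr]; exact htpr
  have htqr : third q (third p q) = p := by
    have h := hP.third_third q p hqp; rwa [htqp] at h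
  have htrq : third (third p q) q = p := by
    rw [← hP.third_symm q (third p q) hqr]; exact htqr
  -- s * e x = 0 for x on the line
  have hs0 : ∀ x, x = p ∨ x = q ∨ x = third p q →
      (e p + e q + e (third p q)) * e x = 0 := by
    rintro x (hx | hx | hx)
    · rw [hx, add_mul, add_mul, hM.mul_same,
        hM.mul_of_col q p hnepq.symm hqp, htqp,
        hM.mul_of_col (third p q) p hrnep hrp, htrp]
      abel_nf
      simp only [z2, add_zero, zero_add]
    · rw [hx, add_mul, add_mul, hM.mul_same,
        hM.mul_of_col p q hnepq hpq,
        hM.mul_of_col (third p q) q hrneq hrq, htrq]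
      abel_nf
      simp only [z2, add_zero, zero_add]
    · rw [hx, add_mul, add_mul, hM.mul_same,
        hM.mul_of_col p (third p q) hrnep.symm hpr, htpr,
        hM.mul_of_col q (third p q) hrneq.symm hqr, htqr]
      abel_nf
      simp only [z2, add_zero, zero_add]
  have key : ∀ x : P, (e p + e q + e (third p q)) * ((e p + e q + e (third p q)) * e x) =
      (e p + e q + e (third p q)) * e x := by
    intro x
    by_cases hx1 : x = p ∨ x = q ∨ x = third p q
    · rw [hs0 x hx1, mul_zero]
    push_neg at hx1
    obtain ⟨hxp, hxq, hxr⟩ := hx1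
    by_cases hcx : col x p ∨ col x q ∨ col x (third p q)
    · -- x collinear with some point a of the line: use the quadrilateral
      have main : ∀ a, a ∈ lineSet third p q → col x a →
          (e p + e q + e (third p q)) * ((e p + e q + e (third p q)) * e x) =
          (e p + e q + e (third p q)) * e x := by
        intro a ha hxa
        have hlne : lineSet third p q ≠ lineSet third x a := by
          intro hEq
          have hxmem : x ∈ lineSet third x a := by simp [lineSet]
          rw [← hEq] at hxmem
          simp only [lineSet, Set.mem_insert_iff, Set.mem_singleton_iff] at hxmem
          rcases hxmem with h | h | h
          exacts [hxp h, hxq h, hxr h]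
        have hmeet : (lineSet third p q ∩ lineSet third x a).Nonempty :=
          ⟨a, ha, by simp [lineSet]⟩
        obtain ⟨f, hinj, hrange, hcoliff, hthird⟩ := hS.cq p q x a hpq hxa hlne hmeet
        have hsub : lineSet third p q ∪ lineSet third x a ⊆ Set.range f := by
          rw [hrange]
          exact fun y hy => Set.mem_sInter.2 fun S hSS => hSS.1 hy
        obtain ⟨u, hu⟩ := hsub (Set.mem_union_left _ (by simp [lineSet] : p ∈ lineSet third p q))
        obtain ⟨v, hv⟩ := hsub (Set.mem_union_left _ (by simp [lineSet] : q ∈ lineSet third p q))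
        obtain ⟨t, ht⟩ := hsub (Set.mem_union_right _ (by simp [lineSet] : x ∈ lineSet third x a))
        have hcquv : CQPt.col u v := (hcoliff u v).1 (by rw [hu, hv]; exact hpq)
        have hw : f (CQPt.third u v) = third p q := by rw [hthird u v hcquv, hu, hv]
        have hg := cq_key (fun c => e (f c)) h2 (fun c => hM.mul_same (f c))
          (fun c d hcd => by
            have hfne : f c ≠ f d := fun h => hcd.1 (hinj h)
            have hfc : col (f c) (f d) := (hcoliff c d).2 hcd
            rw [hM.mul_of_col _ _ hfne hfc, ← hthird c d hcd])
          (fun c d hcd hncd => hM.mul_of_not_col _ _ (fun h => hcd (hinj h))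
            (fun h => hncd ((hcoliff c d).1 h)))
          u v t hcquv
        rw [← hw, ← hu, ← hv, ← ht]
        exact hg
      rcases hcx with h | h | h
      · exact main p (by simp [lineSet]) h
      · exact main q (by simp [lineSet]) h
      · exact main (third p q) (by simp [lineSet]) h
    · push_neg at hcx
      obtain ⟨h1, h2', h3⟩ := hcx
      have hz : (e p + e q + e (third p q)) * e x = 0 := by
        rw [add_mul, add_mul,
          hM.mul_of_not_col p x (fun h => hxp h.symm) (fun h => h1 (hP.symm _ _ h)),
          hM.mul_of_not_col q x (fun h => hxq h.symm) (fun h => h2' (hP.symm _ _ h)),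
          hM.mul_of_not_col (third p q) x (fun h => hxr h.symm) (fun h => h3 (hP.symm _ _ h))]
        simp
      rw [hz, mul_zero]
  -- extend from basis vectors to all of A
  let L : A →ₗ[R] A := LinearMap.mulLeft R (e p + e q + e (third p q))
  have hL : L ∘ₗ L = L := e.ext fun x => by
    simpa [L, LinearMap.mulLeft_apply] using key x
  intro a
  have h := LinearMap.congr_fun hL a
  simpa [L, LinearMap.mulLeft_apply] using h
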